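/- Orbit-sum lemma on the square: for every n ≥ 1, every plaquette α of the n×n FPL domain, and every φ ∈ Fpl(n,+), one has Σ_{φ′ ∈ O(φ)} N_α(φ′) = 0, where O(φ) = {G^k(φ) : k ≥ 0} is the orbit of φ under the gyration G. -/

import Mathlib

open scoped Classical

/-! ### Link patterns

A link pattern on `2n` cyclically ordered points is a fixed-point-free noncrossing
involution.  The point `i : ZMod (2*n)` represents the label `lbl (2*n) i ∈ {1,…,2n}`
(so label arithmetic is arithmetic in `ZMod (2*n)`). -/

instance instNeZeroTwoMul (n : ℕ) [NeZero n] : NeZero (2 * n) :=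
  ⟨by have := NeZero.ne n; omega⟩

/-- The label in `{1,…,M}` represented by a point of `ZMod M`. -/
def lbl (M : ℕ) (i : ZMod M) : ℕ := if i.val = 0 then M else i.val

/-- A fixed-point-free involution of the `2n` points on a circle which is noncrossing. -/
def IsLinkPattern (n : ℕ) (f : ZMod (2 * n) → ZMod (2 * n)) : Prop :=
  Function.Involutive f ∧ (∀ i, f i ≠ i) ∧
    ∀ i j : ZMod (2 * n), ¬ (i.val < j.val ∧ j.val < (f i).val ∧ (f i).val < (f j).val)

/-- The set `LP(n)` of link patterns on `2n` points, as a subtype. -/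
abbrev LinkPattern (n : ℕ) := {f : ZMod (2 * n) → ZMod (2 * n) // IsLinkPattern n f}

/-- Rotation `R`: `R π` pairs `i-1` with `j-1` whenever `π` pairs `i` with `j`. -/
def rotMap (M : ℕ) (f : ZMod M → ZMod M) : ZMod M → ZMod M := fun i => f (i + 1) - 1

/-- Inverse rotation `R⁻¹`. -/
def rotInvMap (M : ℕ) (f : ZMod M → ZMod M) : ZMod M → ZMod M := fun i => f (i - 1) + 1

/-- The Temperley–Lieb map `e_j` (here `j : ZMod M` represents the label `lbl M j`):
if `π` pairs `j` with `j+1` it does nothing, otherwise it re-pairs `j` with `j+1`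
and `π(j)` with `π(j+1)`. -/
def eMap (M : ℕ) (j : ZMod M) (f : ZMod M → ZMod M) : ZMod M → ZMod M := fun i =>
  if f j = j + 1 then f i
  else if i = j then j + 1
  else if i = j + 1 then j
  else if i = f j then f (j + 1)
  else if i = f (j + 1) then f j
  else f i

/-! ### The `n × n` FPL domain

Vertices are `(x,y)` with `1 ≤ x,y ≤ n`.  `SqEdge.h x y` is the horizontal edge joining
`(x,y)` and `(x+1,y)` (valid for `0 ≤ x ≤ n`, `1 ≤ y ≤ n`; `x = 0` and `x = n` give the
west/east external edges); `SqEdge.v x y` is the vertical edge joining `(x,y)` and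
`(x,y+1)` (valid for `1 ≤ x ≤ n`, `0 ≤ y ≤ n`; `y = 0` and `y = n` give the south/north
external edges).  A configuration is a map `SqEdge → Bool` (`true` = black). -/

inductive SqEdge : Type
  | h : ℕ → ℕ → SqEdge
  | v : ℕ → ℕ → SqEdge
deriving DecidableEq

/-- Validity of an edge for the `n × n` domain. -/
def validB (n : ℕ) : SqEdge → Bool
  | .h x y => decide (x ≤ n) && decide (1 ≤ y) && decide (y ≤ n)
  | .v x y => decide (1 ≤ x) && decide (x ≤ n) && decide (y ≤ n)

/-- The external edge with counterclockwise label `k ∈ {1,…,4n}`, starting from the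
bottom external edge of the corner vertex `(1,1)`. -/
def extEdge (n k : ℕ) : SqEdge :=
  if k ≤ n then .v k 0
  else if k ≤ 2 * n then .h n (k - n)
  else if k ≤ 3 * n then .v (3 * n + 1 - k) n
  else .h 0 (4 * n + 1 - k)

def IsExternal (n : ℕ) (e : SqEdge) : Prop := ∃ k, 1 ≤ k ∧ k ≤ 4 * n ∧ e = extEdge n k

/-- The west, east, south, north edges incident to the vertex `(x,y)`. -/
def wEdge (x y : ℕ) : SqEdge := .h (x - 1) y
def eEdge (x y : ℕ) : SqEdge := .h x y
def sEdge (x y : ℕ) : SqEdge := .v x (y - 1)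
def nEdge (x y : ℕ) : SqEdge := .v x y

def IncidentAt (e : SqEdge) (x y : ℕ) : Prop :=
  e = wEdge x y ∨ e = eEdge x y ∨ e = sEdge x y ∨ e = nEdge x y

def blackDeg (φ : SqEdge → Bool) (x y : ℕ) : ℕ :=
  (if φ (wEdge x y) then 1 else 0) + (if φ (eEdge x y) then 1 else 0) +
    (if φ (sEdge x y) then 1 else 0) + (if φ (nEdge x y) then 1 else 0)

/-- A fully-packed loop configuration on the `n × n` domain: it is supported on the
valid edges, and every vertex is incident to exactly two black (and two white) edges. -/
def IsFpl (n : ℕ) (φ : SqEdge → Bool) : Prop :=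
  (∀ e, φ e = true → validB n e = true) ∧
    ∀ x y, 1 ≤ x → x ≤ n → 1 ≤ y → y ≤ n → blackDeg φ x y = 2

/-- Alternating boundary colouring `τ₊` (external label `1` black). -/
def BPlus (n : ℕ) (φ : SqEdge → Bool) : Prop :=
  ∀ k, 1 ≤ k → k ≤ 4 * n → (φ (extEdge n k) = true ↔ k % 2 = 1)

/-- Complementary alternating boundary colouring `τ₋`. -/
def BMinus (n : ℕ) (φ : SqEdge → Bool) : Prop :=
  ∀ k, 1 ≤ k → k ≤ 4 * n → (φ (extEdge n k) = true ↔ k % 2 = 0)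

/-- Two (valid) edges of colour `b` sharing an internal vertex. -/
def adjC (n : ℕ) (b : Bool) (φ : SqEdge → Bool) (e e' : SqEdge) : Prop :=
  e ≠ e' ∧ validB n e = true ∧ validB n e' = true ∧ φ e = b ∧ φ e' = b ∧
    ∃ x y, 1 ≤ x ∧ x ≤ n ∧ 1 ≤ y ∧ y ≤ n ∧ IncidentAt e x y ∧ IncidentAt e' x y

/-- Connectivity through monochromatic paths of colour `b`. -/
def Conn (n : ℕ) (b : Bool) (φ : SqEdge → Bool) : SqEdge → SqEdge → Prop :=
  Relation.ReflTransGen (adjC n b φ)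

/-- In `Fpl(n,+)` the black external edge with black label `t ∈ {1,…,2n}` has overall
label `2t-1`.  `φ` has link pattern (matching) `g` iff for every point `i` the black
external edges with black labels `lbl i` and `lbl (g i)` are joined by a black path. -/
def RealizesP (n : ℕ) (φ : SqEdge → Bool) (g : ZMod (2 * n) → ZMod (2 * n)) : Prop :=
  ∀ i, Conn n true φ (extEdge n (2 * lbl (2 * n) i - 1)) (extEdge n (2 * lbl (2 * n) (g i) - 1))

/-- In `Fpl(n,-)` the black external edge with black label `t` has overall label `2t`
(black labelling starting from the bottom external edge of the vertex `(2,1)`). -/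
def RealizesM (n : ℕ) (φ : SqEdge → Bool) (g : ZMod (2 * n) → ZMod (2 * n)) : Prop :=
  ∀ i, Conn n true φ (extEdge n (2 * lbl (2 * n) i)) (extEdge n (2 * lbl (2 * n) (g i)))

/-- `Ψ_{n,+}(g)`: the number of FPLs in `Fpl(n,+)` with link pattern `g`. -/
noncomputable def PsiP (n : ℕ) (g : ZMod (2 * n) → ZMod (2 * n)) : ℕ :=
  Set.ncard {φ : SqEdge → Bool | IsFpl n φ ∧ BPlus n φ ∧ RealizesP n φ g}

/-- `Ψ_{n,-}(g)`: the number of FPLs in `Fpl(n,-)` with link pattern `g`. -/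
noncomputable def PsiM (n : ℕ) (g : ZMod (2 * n) → ZMod (2 * n)) : ℕ :=
  Set.ncard {φ : SqEdge → Bool | IsFpl n φ ∧ BMinus n φ ∧ RealizesM n φ g}

/-- The plaquette with lower-left corner `(x,y)` (for `1 ≤ x,y ≤ n-1`) has horizontal
edges `.h x y`, `.h x (y+1)` and vertical edges `.v x y`, `.v (x+1) y`.
`Nplaq φ x y` is `+1` if both horizontal edges are black and both vertical edges white,
`-1` in the complementary case, and `0` otherwise. -/
def Nplaq (φ : SqEdge → Bool) (x y : ℕ) : ℤ :=
  if φ (.h x y) = true ∧ φ (.h x (y + 1)) = true ∧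
      φ (.v x y) = false ∧ φ (.v (x + 1) y) = false then 1
  else if φ (.h x y) = false ∧ φ (.h x (y + 1)) = false ∧
      φ (.v x y) = true ∧ φ (.v (x + 1) y) = true then -1
  else 0

/-! ### Wieland gyration on the `n × n` domain.

For `H₊` the external edges are glued in the pairs `(1,2),(3,4),…`; the cells of the
resulting partition of the edge set are the interior plaquettes `(x,y)` with `x+y` odd,
together with boundary cells (of length 2 or 3) through the glued vertices.  For `H₋`
(pairs `(2,3),(4,5),…,(4n,1)`) the interior cells are the plaquettes with `x+y` even.
`H₊/H₋` complement the colours on every cell except the alternating 4-cells (interior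
plaquettes whose colours alternate), which are kept fixed. -/

/-- The interior cell (plaquette of parity `p`) containing the edge `e`, if any;
edges in no interior plaquette of parity `p` lie in a boundary cell. -/
def plaqOf (n p : ℕ) : SqEdge → Option (ℕ × ℕ)
  | .h x y =>
    if 1 ≤ x ∧ x ≤ n - 1 ∧ 1 ≤ y ∧ y ≤ n - 1 ∧ (x + y) % 2 = p then some (x, y)
    else if 1 ≤ x ∧ x ≤ n - 1 ∧ 2 ≤ y ∧ y ≤ n ∧ (x + y - 1) % 2 = p then some (x, y - 1)
    else none
  | .v x y =>
    if 1 ≤ x ∧ x ≤ n - 1 ∧ 1 ≤ y ∧ y ≤ n - 1 ∧ (x + y) % 2 = p then some (x, y)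
    else if 2 ≤ x ∧ x ≤ n ∧ 1 ≤ y ∧ y ≤ n - 1 ∧ (x + y - 1) % 2 = p then some (x - 1, y)
    else none

/-- Colours alternate around the plaquette `(x,y)`. -/
def altPlaq (φ : SqEdge → Bool) (x y : ℕ) : Bool :=
  (φ (.h x y) == φ (.h x (y + 1))) && (φ (.v x y) == φ (.v (x + 1) y)) &&
    (φ (.h x y) != φ (.v x y))

/-- One gyration round on the cells of parity `p`. -/
def gyrHalf (n p : ℕ) (φ : SqEdge → Bool) : SqEdge → Bool := fun e =>
  if validB n e then
    match plaqOf n p e with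
    | some (x, y) => if altPlaq φ x y then φ e else !(φ e)
    | none => !(φ e)
  else false

/-- The gyration round `H₊` (interior cells: plaquettes with `x+y` odd). -/
def Hplus (n : ℕ) : (SqEdge → Bool) → SqEdge → Bool := gyrHalf n 1

/-- The gyration round `H₋` (interior cells: plaquettes with `x+y` even). -/
def Hminus (n : ℕ) : (SqEdge → Bool) → SqEdge → Bool := gyrHalf n 0

/-- Wieland's gyration `G = H₋ ∘ H₊`. -/
def gyr (n : ℕ) (φ : SqEdge → Bool) : SqEdge → Bool := Hminus n (Hplus n φ)

/-- Complementation of the colours of all (valid) edges. -/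
def complV (n : ℕ) (φ : SqEdge → Bool) : SqEdge → Bool := fun e =>
  if validB n e then !(φ e) else false

/-- `H̃₊`: the round `H₊` followed by complementation (a map `Fpl(n,+) → Fpl(n,+)`). -/
def Htp (n : ℕ) (φ : SqEdge → Bool) : SqEdge → Bool := complV n (Hplus n φ)

/-- The orbit `{G^k φ : k ≥ 0}` of `φ` under gyration. -/
def orbitG (n : ℕ) (φ : SqEdge → Bool) : Set (SqEdge → Bool) :=
  Set.range fun k => (gyr n)^[k] φ



/-! ### Auxiliary material for the orbit-sum lemma -/

/-- Alternating column sum (height-function potential). -/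
def dcol (ψ : SqEdge → Bool) (x : ℕ) : ℕ → ℤ
  | 0 => 0
  | (y+1) => (if ψ (.h x (y+1)) then 1 else 0) - dcol ψ x y

lemma osl_alt_bot {φ : SqEdge → Bool} {a b : ℕ} (h : altPlaq φ a b = true) :
    Nplaq φ a b = if φ (.h a b) then 1 else -1 := by
  cases h1 : φ (.h a b) <;> cases h2 : φ (.h a (b+1)) <;>
    cases h3 : φ (.v a b) <;> cases h4 : φ (.v (a+1) b) <;>
    simp_all [altPlaq, Nplaq]

lemma osl_alt_top {φ : SqEdge → Bool} {a b : ℕ} (h : altPlaq φ a b = true) :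
    Nplaq φ a b = if φ (.h a (b+1)) then 1 else -1 := by
  cases h1 : φ (.h a b) <;> cases h2 : φ (.h a (b+1)) <;>
    cases h3 : φ (.v a b) <;> cases h4 : φ (.v (a+1) b) <;>
    simp_all [altPlaq, Nplaq]

lemma osl_nalt {φ : SqEdge → Bool} {a b : ℕ} (h : altPlaq φ a b = false) :
    Nplaq φ a b = 0 := by
  cases h1 : φ (.h a b) <;> cases h2 : φ (.h a (b+1)) <;>
    cases h3 : φ (.v a b) <;> cases h4 : φ (.v (a+1) b) <;>
    simp_all [altPlaq, Nplaq]

lemma osl_validB_h {n x y : ℕ} (h1 : x ≤ n) (h2 : 1 ≤ y) (h3 : y ≤ n) :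
    validB n (.h x y) = true := by
  simp only [validB, Bool.and_eq_true, decide_eq_true_eq]; omega

lemma osl_validB_v {n x y : ℕ} (h1 : 1 ≤ x) (h2 : x ≤ n) (h3 : y ≤ n) :
    validB n (.v x y) = true := by
  simp only [validB, Bool.and_eq_true, decide_eq_true_eq]; omega

/-- plaqOf of the bottom horizontal edge of an in-range parity-`p` plaquette. -/
lemma osl_plaqOf_h_bot {n p x b : ℕ} (hx : 1 ≤ x) (hx' : x ≤ n - 1)
    (hb : 1 ≤ b) (hb' : b ≤ n - 1) (hp : (x + b) % 2 = p) :
    plaqOf n p (.h x b) = some (x, b) := by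
  simp only [plaqOf]
  rw [if_pos ⟨hx, hx', hb, hb', hp⟩]

/-- plaqOf of the top horizontal edge: the edge `.h x j` with `2 ≤ j`, belonging to the
plaquette `(x, j-1)` of parity `p`. -/
lemma osl_plaqOf_h_top {n p x j : ℕ} (hx : 1 ≤ x) (hx' : x ≤ n - 1)
    (hj : 2 ≤ j) (hj' : j ≤ n) (hp : (x + j - 1) % 2 = p) (hp2 : p ≤ 1) :
    plaqOf n p (.h x j) = some (x, j - 1) := by
  simp only [plaqOf]
  rw [if_neg (by omega), if_pos ⟨hx, hx', hj, hj', hp⟩]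

lemma osl_plaqOf_h_none {n p x : ℕ} (hp : (x + 1) % 2 ≠ p) :
    plaqOf n p (.h x 1) = none := by
  simp only [plaqOf]
  rw [if_neg (by omega), if_neg (by omega)]

lemma osl_plaqOf_v_left {n p x b : ℕ} (hx : 1 ≤ x) (hx' : x ≤ n - 1)
    (hb : 1 ≤ b) (hb' : b ≤ n - 1) (hp : (x + b) % 2 = p) :
    plaqOf n p (.v x b) = some (x, b) := by
  simp only [plaqOf]
  rw [if_pos ⟨hx, hx', hb, hb', hp⟩]

lemma osl_plaqOf_v_right {n p x b : ℕ} (hx : 1 ≤ x) (hx' : x ≤ n - 1)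
    (hb : 1 ≤ b) (hb' : b ≤ n - 1) (hp : (x + b) % 2 = p) (hp2 : p ≤ 1) :
    plaqOf n p (.v (x+1) b) = some (x, b) := by
  simp only [plaqOf]
  rw [if_neg (by omega), if_pos (by omega)]
  simp

lemma osl_plaqOf_h_top' {n p x b : ℕ} (hx : 1 ≤ x) (hx' : x ≤ n - 1)
    (hb : 1 ≤ b) (hb' : b ≤ n - 1) (hp : (x + b) % 2 = p) (hp2 : p ≤ 1) :
    plaqOf n p (.h x (b+1)) = some (x, b) := by
  have := osl_plaqOf_h_top (n := n) (p := p) (x := x) (j := b+1) hx hx'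
    (by omega) (by omega) (by omega) hp2
  simpa using this

lemma osl_gyrHalf_some {n p : ℕ} {e : SqEdge} {a b : ℕ} (hv : validB n e = true)
    (hq : plaqOf n p e = some (a, b)) (φ : SqEdge → Bool) :
    gyrHalf n p φ e = if altPlaq φ a b then φ e else !(φ e) := by
  simp [gyrHalf, hv, hq]

lemma osl_gyrHalf_none {n p : ℕ} {e : SqEdge} (hv : validB n e = true)
    (hq : plaqOf n p e = none) (φ : SqEdge → Bool) :
    gyrHalf n p φ e = !(φ e) := by
  simp [gyrHalf, hv, hq]

lemma osl_altPlaq_gyrHalf {n p x b : ℕ} (hx : 1 ≤ x) (hx' : x ≤ n - 1)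
    (hb : 1 ≤ b) (hb' : b ≤ n - 1) (hp : (x + b) % 2 = p) (hp2 : p ≤ 1)
    (φ : SqEdge → Bool) :
    altPlaq (gyrHalf n p φ) x b = altPlaq φ x b := by
  have hn2 : 2 ≤ n := by omega
  have e1 := osl_gyrHalf_some (osl_validB_h (by omega) hb (by omega))
    (osl_plaqOf_h_bot hx hx' hb hb' hp) φ
  have e2 := osl_gyrHalf_some (osl_validB_h (by omega) (by omega) (by omega))
    (osl_plaqOf_h_top' hx hx' hb hb' hp hp2) φ
  have e3 := osl_gyrHalf_some (osl_validB_v hx (by omega) (by omega))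
    (osl_plaqOf_v_left hx hx' hb hb' hp) φ
  have e4 := osl_gyrHalf_some (osl_validB_v (by omega) (by omega) (by omega))
    (osl_plaqOf_v_right hx hx' hb hb' hp hp2) φ
  cases hA : altPlaq φ x b
  · rw [hA] at e1 e2 e3 e4
    simp only [if_false, Bool.false_eq_true] at e1 e2 e3 e4
    revert hA
    cases h1 : φ (.h x b) <;> cases h2 : φ (.h x (b+1)) <;>
      cases h3 : φ (.v x b) <;> cases h4 : φ (.v (x+1) b) <;>
      simp_all [altPlaq]
  · rw [hA] at e1 e2 e3 e4
    simp only [if_true] at e1 e2 e3 e4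
    simp only [altPlaq, e1, e2, e3, e4]
    exact hA

lemma osl_Nplaq_gyrHalf {n p x b : ℕ} (hx : 1 ≤ x) (hx' : x ≤ n - 1)
    (hb : 1 ≤ b) (hb' : b ≤ n - 1) (hp : (x + b) % 2 = p) (hp2 : p ≤ 1)
    (φ : SqEdge → Bool) :
    Nplaq (gyrHalf n p φ) x b = Nplaq φ x b := by
  have hn2 : 2 ≤ n := by omega
  have e1 := osl_gyrHalf_some (osl_validB_h (by omega) hb (by omega))
    (osl_plaqOf_h_bot hx hx' hb hb' hp) φ
  have e2 := osl_gyrHalf_some (osl_validB_h (by omega) (by omega) (by omega))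
    (osl_plaqOf_h_top' hx hx' hb hb' hp hp2) φ
  have e3 := osl_gyrHalf_some (osl_validB_v hx (by omega) (by omega))
    (osl_plaqOf_v_left hx hx' hb hb' hp) φ
  have e4 := osl_gyrHalf_some (osl_validB_v (by omega) (by omega) (by omega))
    (osl_plaqOf_v_right hx hx' hb hb' hp hp2) φ
  cases hA : altPlaq φ x b
  · have hA' : altPlaq (gyrHalf n p φ) x b = false := by
      rw [osl_altPlaq_gyrHalf hx hx' hb hb' hp hp2 φ]; exact hA
    rw [osl_nalt hA', osl_nalt hA]
  · rw [hA] at e1 e2 e3 e4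
    simp only [if_true] at e1 e2 e3 e4
    simp only [Nplaq, e1, e2, e3, e4]

lemma osl_plaqOf_range {n p : ℕ} {e : SqEdge} {a b : ℕ}
    (h : plaqOf n p e = some (a, b)) (hp2 : p ≤ 1) :
    1 ≤ a ∧ a ≤ n - 1 ∧ 1 ≤ b ∧ b ≤ n - 1 ∧ (a + b) % 2 = p := by
  cases e with
  | h u v =>
    simp only [plaqOf] at h
    split_ifs at h with h1 h2
    · simp only [Option.some.injEq, Prod.mk.injEq] at h
      obtain ⟨rfl, rfl⟩ := h; omega
    · simp only [Option.some.injEq, Prod.mk.injEq] at h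
      obtain ⟨rfl, rfl⟩ := h; omega
  | v u v =>
    simp only [plaqOf] at h
    split_ifs at h with h1 h2
    · simp only [Option.some.injEq, Prod.mk.injEq] at h
      obtain ⟨rfl, rfl⟩ := h; omega
    · simp only [Option.some.injEq, Prod.mk.injEq] at h
      obtain ⟨rfl, rfl⟩ := h; omega

lemma osl_gyrHalf_invol {n p : ℕ} (hp2 : p ≤ 1) {φ : SqEdge → Bool}
    (hφ : ∀ e, validB n e = false → φ e = false) :
    gyrHalf n p (gyrHalf n p φ) = φ := by
  funext e
  by_cases hv : validB n e = true
  · rcases hq : plaqOf n p e with _ | ⟨a, b⟩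
    · simp [gyrHalf, hv, hq]
    · obtain ⟨h1, h2, h3, h4, h5⟩ := osl_plaqOf_range hq hp2
      have hA := osl_altPlaq_gyrHalf h1 h2 h3 h4 h5 hp2 φ
      rw [osl_gyrHalf_some hv hq (gyrHalf n p φ), osl_gyrHalf_some hv hq φ, hA]
      cases hAv : altPlaq φ a b <;> simp
  · have hv' : validB n e = false := by revert hv; cases validB n e <;> simp
    have h1 : φ e = false := hφ e hv'
    simp [gyrHalf, hv', h1]

/-- The single-edge step identity: how gyration changes a horizontal edge, in terms of
the plaquette weights of the two adjacent cells. -/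
lemma osl_edgeStep (n x j : ℕ) (hx : 1 ≤ x) (hx' : x ≤ n - 1)
    (hj : 1 ≤ j) (hj' : j ≤ n - 1) (ψ : SqEdge → Bool) :
    ((if gyr n ψ (.h x j) then (1:ℤ) else 0) - (if ψ (.h x j) then 1 else 0)) =
      (if (x + j) % 2 = 0 then
        Nplaq (Hplus n ψ) x j - (if 2 ≤ j then Nplaq ψ x (j-1) else 0)
      else
        (if 2 ≤ j then Nplaq (Hplus n ψ) x (j-1) else 0) - Nplaq ψ x j) := by
  have hn2 : 2 ≤ n := by omega
  have hv : validB n (.h x j) = true := osl_validB_h (by omega) hj (by omega)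
  set χ := Hplus n ψ with hχ
  have hgyr : gyr n ψ = gyrHalf n 0 χ := rfl
  have hχdef : χ = gyrHalf n 1 ψ := rfl
  have hj1e : j - 1 + 1 = j := by omega
  by_cases hpar : (x + j) % 2 = 0
  · -- parity-0 cell is (x, j); parity-1 cell is (x, j-1) (if j ≥ 2)
    have hGe : gyr n ψ (.h x j)
        = if altPlaq χ x j then χ (.h x j) else !(χ (.h x j)) := by
      rw [hgyr]
      exact osl_gyrHalf_some hv (osl_plaqOf_h_bot hx hx' hj hj' hpar) χ
    rw [if_pos hpar]
    by_cases hj2 : 2 ≤ j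
    · have hCe : χ (.h x j)
          = if altPlaq ψ x (j-1) then ψ (.h x j) else !(ψ (.h x j)) := by
        rw [hχdef]
        exact osl_gyrHalf_some hv
          (osl_plaqOf_h_top hx hx' hj2 (by omega) (by omega) (by omega)) ψ
      rw [if_pos hj2]
      cases hA1 : altPlaq ψ x (j-1) <;> cases hA2 : altPlaq χ x j
      · rw [osl_nalt hA1, osl_nalt hA2]
        rw [hA1] at hCe; rw [hA2] at hGe
        simp only [if_false, Bool.false_eq_true] at hCe hGe
        rw [hGe, hCe]
        cases hb : ψ (.h x j) <;> norm_num
      · rw [osl_nalt hA1, osl_alt_bot hA2]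
        rw [hA1] at hCe; rw [hA2] at hGe
        simp only [if_false, if_true, Bool.false_eq_true] at hCe hGe
        rw [hGe, hCe]
        cases hb : ψ (.h x j) <;> norm_num
      · have hT := osl_alt_top hA1
        rw [hj1e] at hT
        rw [hT, osl_nalt hA2]
        rw [hA1] at hCe; rw [hA2] at hGe
        simp only [if_true, if_false, Bool.false_eq_true] at hCe hGe
        rw [hGe, hCe]
        cases hb : ψ (.h x j) <;> norm_num
      · have hT := osl_alt_top hA1
        rw [hj1e] at hT
        rw [hT, osl_alt_bot hA2]
        rw [hA1] at hCe; rw [hA2] at hGe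
        simp only [if_true] at hCe hGe
        rw [hGe, hCe]
        cases hb : ψ (.h x j) <;> norm_num
    · -- j = 1, so the parity-1 cell below is out of range
      have hj1 : j = 1 := by omega
      subst hj1
      have hCe : χ (.h x 1) = !(ψ (.h x 1)) := by
        rw [hχdef]
        exact osl_gyrHalf_none hv (osl_plaqOf_h_none (by omega)) ψ
      rw [if_neg hj2]
      cases hA2 : altPlaq χ x 1
      · rw [osl_nalt hA2]
        rw [hA2] at hGe
        simp only [if_false, Bool.false_eq_true] at hGe
        rw [hGe, hCe]
        cases hb : ψ (.h x 1) <;> norm_num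
      · rw [osl_alt_bot hA2]
        rw [hA2] at hGe
        simp only [if_true] at hGe
        rw [hGe, hCe]
        cases hb : ψ (.h x 1) <;> norm_num
  · -- parity-1 cell is (x, j); parity-0 cell is (x, j-1) (if j ≥ 2)
    have hpar1 : (x + j) % 2 = 1 := by omega
    have hCe : χ (.h x j)
        = if altPlaq ψ x j then ψ (.h x j) else !(ψ (.h x j)) := by
      rw [hχdef]
      exact osl_gyrHalf_some hv (osl_plaqOf_h_bot hx hx' hj hj' hpar1) ψ
    rw [if_neg hpar]
    by_cases hj2 : 2 ≤ j
    · have hGe : gyr n ψ (.h x j)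
          = if altPlaq χ x (j-1) then χ (.h x j) else !(χ (.h x j)) := by
        rw [hgyr]
        exact osl_gyrHalf_some hv
          (osl_plaqOf_h_top hx hx' hj2 (by omega) (by omega) (by omega)) χ
      rw [if_pos hj2]
      cases hA1 : altPlaq ψ x j <;> cases hA2 : altPlaq χ x (j-1)
      · rw [osl_nalt hA1, osl_nalt hA2]
        rw [hA1] at hCe; rw [hA2] at hGe
        simp only [if_false, Bool.false_eq_true] at hCe hGe
        rw [hGe, hCe]
        cases hb : ψ (.h x j) <;> norm_num
      · have hT := osl_alt_top hA2
        rw [hj1e] at hT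
        rw [osl_nalt hA1, hT]
        rw [hA1] at hCe; rw [hA2] at hGe
        simp only [if_false, if_true, Bool.false_eq_true] at hCe hGe
        rw [hGe, hCe]
        cases hb : ψ (.h x j) <;> norm_num
      · rw [osl_alt_bot hA1, osl_nalt hA2]
        rw [hA1] at hCe; rw [hA2] at hGe
        simp only [if_true, if_false, Bool.false_eq_true] at hCe hGe
        rw [hGe, hCe]
        cases hb : ψ (.h x j) <;> norm_num
      · have hT := osl_alt_top hA2
        rw [hj1e] at hT
        rw [osl_alt_bot hA1, hT]
        rw [hA1] at hCe; rw [hA2] at hGe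
        simp only [if_true] at hCe hGe
        rw [hGe, hCe]
        cases hb : ψ (.h x j) <;> norm_num
    · have hj1 : j = 1 := by omega
      subst hj1
      have hGe : gyr n ψ (.h x 1) = !(χ (.h x 1)) := by
        rw [hgyr]
        exact osl_gyrHalf_none hv (osl_plaqOf_h_none (by omega)) χ
      rw [if_neg hj2]
      cases hA1 : altPlaq ψ x 1
      · rw [osl_nalt hA1]
        rw [hA1] at hCe
        simp only [if_false, Bool.false_eq_true] at hCe
        rw [hGe, hCe]
        cases hb : ψ (.h x 1) <;> norm_num
      · rw [osl_alt_bot hA1]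
        rw [hA1] at hCe
        simp only [if_true] at hCe
        rw [hGe, hCe]
        cases hb : ψ (.h x 1) <;> norm_num

/-- The column-sum identity: the potential difference along a column telescopes to a
single plaquette weight. -/
lemma osl_colSum (n x : ℕ) (hx : 1 ≤ x) (hx' : x ≤ n - 1) (ψ : SqEdge → Bool) :
    ∀ y, y ≤ n - 1 →
      dcol (gyr n ψ) x y - dcol ψ x y =
        if (x + y) % 2 = 0 then (if 1 ≤ y then Nplaq (Hplus n ψ) x y else 0)
        else (if 1 ≤ y then -Nplaq ψ x y else 0) := by
  intro y
  induction y with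
  | zero =>
    intro _
    simp only [dcol, sub_self]
    split_ifs <;> first | rfl | omega
  | succ y IH =>
    intro hy'
    have IH' := IH (by omega)
    have ES := osl_edgeStep n x (y+1) hx hx' (by omega) hy' ψ
    simp only [Nat.add_sub_cancel] at ES
    simp only [dcol]
    by_cases hp : (x + (y+1)) % 2 = 0
    · rw [if_pos hp] at ES ⊢
      rw [if_pos (by omega : 1 ≤ y + 1)]
      rw [if_neg (by omega : ¬ (x + y) % 2 = 0)] at IH'
      by_cases h1y : 1 ≤ y
      · rw [if_pos (by omega : 2 ≤ y + 1)] at ES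
        rw [if_pos h1y] at IH'
        omega
      · rw [if_neg (by omega : ¬ 2 ≤ y + 1)] at ES
        rw [if_neg h1y] at IH'
        omega
    · rw [if_neg hp] at ES ⊢
      rw [if_pos (by omega : 1 ≤ y + 1)]
      rw [if_pos (by omega : (x + y) % 2 = 0)] at IH'
      by_cases h1y : 1 ≤ y
      · rw [if_pos (by omega : 2 ≤ y + 1)] at ES
        rw [if_pos h1y] at IH'
        omega
      · rw [if_neg (by omega : ¬ 2 ≤ y + 1)] at ES
        rw [if_neg h1y] at IH'
        omega

/-- Explicit inverse of gyration. -/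
def gyrInv (n : ℕ) (φ : SqEdge → Bool) : SqEdge → Bool := Hplus n (Hminus n φ)

lemma osl_supp_gyrHalf (n p : ℕ) (φ : SqEdge → Bool) :
    ∀ e, validB n e = false → gyrHalf n p φ e = false := by
  intro e hv; simp [gyrHalf, hv]

lemma osl_gyr_inv_left (n : ℕ) {φ : SqEdge → Bool}
    (h : ∀ e, validB n e = false → φ e = false) : gyrInv n (gyr n φ) = φ := by
  show gyrHalf n 1 (gyrHalf n 0 (gyrHalf n 0 (gyrHalf n 1 φ))) = φ
  rw [osl_gyrHalf_invol (by omega) (osl_supp_gyrHalf n 1 φ),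
    osl_gyrHalf_invol (by omega) h]

lemma osl_gyr_inv_right (n : ℕ) {φ : SqEdge → Bool}
    (h : ∀ e, validB n e = false → φ e = false) : gyr n (gyrInv n φ) = φ := by
  show gyrHalf n 0 (gyrHalf n 1 (gyrHalf n 1 (gyrHalf n 0 φ))) = φ
  rw [osl_gyrHalf_invol (by omega) (osl_supp_gyrHalf n 0 φ),
    osl_gyrHalf_invol (by omega) h]

lemma osl_V_finite (n : ℕ) :
    {φ : SqEdge → Bool | ∀ e, validB n e = false → φ e = false}.Finite := by
  classical
  set F : Finset SqEdge :=
    ((Finset.range (n+1) ×ˢ Finset.range (n+1)).image fun q => SqEdge.h q.1 q.2) ∪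
    ((Finset.range (n+1) ×ˢ Finset.range (n+1)).image fun q => SqEdge.v q.1 q.2) with hF
  have hmem : ∀ e, validB n e = true → e ∈ F := by
    intro e he
    cases e with
    | h a b =>
      have hab := he
      simp only [validB, Bool.and_eq_true, decide_eq_true_eq] at hab
      simp only [hF, Finset.mem_union, Finset.mem_image, Finset.mem_product,
        Finset.mem_range, Prod.exists]
      exact Or.inl ⟨a, b, ⟨by omega, by omega⟩, rfl⟩
    | v a b =>
      have hab := he
      simp only [validB, Bool.and_eq_true, decide_eq_true_eq] at hab
      simp only [hF, Finset.mem_union, Finset.mem_image, Finset.mem_product,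
        Finset.mem_range, Prod.exists]
      exact Or.inr ⟨a, b, ⟨by omega, by omega⟩, rfl⟩
  rw [← Set.finite_coe_iff]
  have hinj : Function.Injective
      (fun (φ : {φ : SqEdge → Bool | ∀ e, validB n e = false → φ e = false}) =>
        (fun e : F => φ.1 e.1)) := by
    intro φ ψ h
    apply Subtype.ext
    funext e
    by_cases hv : validB n e = true
    · exact congrFun h ⟨e, hmem e hv⟩
    · have hv' : validB n e = false := by revert hv; cases validB n e <;> simp
      rw [φ.2 e hv', ψ.2 e hv']
  exact Finite.of_injective _ hinj

lemma osl_orbit_supp (n : ℕ) {φ : SqEdge → Bool}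
    (hφ : ∀ e, validB n e = false → φ e = false) :
    ∀ k, ∀ e, validB n e = false → (gyr n)^[k] φ e = false := by
  intro k
  cases k with
  | zero => exact hφ
  | succ k =>
    rw [Function.iterate_succ_apply']
    exact osl_supp_gyrHalf n 0 _

lemma osl_cancel (n : ℕ) : ∀ (k : ℕ) (ψ : SqEdge → Bool),
    (∀ e, validB n e = false → ψ e = false) →
    (gyrInv n)^[k] ((gyr n)^[k] ψ) = ψ := by
  intro k
  induction k with
  | zero => intro ψ _; rfl
  | succ k ih =>
    intro ψ hψ
    rw [Function.iterate_succ_apply (gyr n), Function.iterate_succ_apply' (gyrInv n)]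
    rw [ih (gyr n ψ) (osl_orbit_supp n hψ 1)]
    exact osl_gyr_inv_left n hψ

lemma osl_period (n : ℕ) {φ : SqEdge → Bool}
    (hφ : ∀ e, validB n e = false → φ e = false) :
    ∃ m, 1 ≤ m ∧ (gyr n)^[m] φ = φ := by
  have hni : ¬ Function.Injective (fun k => (gyr n)^[k] φ) := by
    intro hinj
    refine (Set.infinite_of_injective_forall_mem
      (s := {φ : SqEdge → Bool | ∀ e, validB n e = false → φ e = false}) hinj
      (fun k => ?_)) (osl_V_finite n)
    exact fun e he => osl_orbit_supp n hφ k e he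
  rw [Function.not_injective_iff] at hni
  obtain ⟨i, j, hij, hne⟩ := hni
  have key : ∀ i j : ℕ, i < j → (gyr n)^[i] φ = (gyr n)^[j] φ →
      ∃ m, 1 ≤ m ∧ (gyr n)^[m] φ = φ := by
    intro i j hlt heq
    refine ⟨j - i, by omega, ?_⟩
    have h1 : (gyr n)^[j] φ = (gyr n)^[i] ((gyr n)^[j-i] φ) := by
      rw [← Function.iterate_add_apply]
      congr 1
      omega
    have h2 := osl_cancel n i φ hφ
    have h3 := osl_cancel n i ((gyr n)^[j-i] φ)
      (fun e he => osl_orbit_supp n hφ (j-i) e he)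
    rw [heq, h1, h3] at h2
    exact h2
  rcases Nat.lt_or_ge i j with h | h
  · exact key i j h hij
  · have : j < i := by omega
    exact key j i this hij.symm

/-- **Orbit-sum lemma on the square.**  For every plaquette `α = (x,y)` of the `n × n`
domain and every `φ ∈ Fpl(n,+)`, the sum of `N_α` over the gyration orbit of `φ`
vanishes. -/
theorem orbit_sum_lemma (n : ℕ) (hn : 1 ≤ n) (x y : ℕ)
    (hx : 1 ≤ x) (hx' : x ≤ n - 1) (hy : 1 ≤ y) (hy' : y ≤ n - 1)
    (φ : SqEdge → Bool) (hφ : IsFpl n φ ∧ BPlus n φ) :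
    ∑ᶠ ψ ∈ orbitG n φ, Nplaq ψ x y = 0 := by
  classical
  have hn2 : 2 ≤ n := by omega
  obtain ⟨⟨hsupp', _⟩, _⟩ := hφ
  have hφV : ∀ e, validB n e = false → φ e = false := by
    intro e he
    cases hb : φ e
    · rfl
    · rw [hsupp' e hb] at he; cases he
  obtain ⟨m, hm1, hmper⟩ := osl_period n hφV
  have hOV : ∀ ψ ∈ orbitG n φ, (∀ e, validB n e = false → ψ e = false) := by
    rintro ψ ⟨k, rfl⟩
    exact osl_orbit_supp n hφV k
  have hfin : (orbitG n φ).Finite := by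
    apply (osl_V_finite n).subset
    intro ψ hψ
    exact hOV ψ hψ
  have hGmem : ∀ ψ ∈ hfin.toFinset, gyr n ψ ∈ hfin.toFinset := by
    intro ψ hψ
    rw [Set.Finite.mem_toFinset] at hψ ⊢
    obtain ⟨k, rfl⟩ := hψ
    refine ⟨k + 1, ?_⟩
    show (gyr n)^[k+1] φ = gyr n ((gyr n)^[k] φ)
    exact Function.iterate_succ_apply' (gyr n) k φ
  have hImem : ∀ ψ ∈ hfin.toFinset, gyrInv n ψ ∈ hfin.toFinset := by
    intro ψ hψ
    rw [Set.Finite.mem_toFinset] at hψ ⊢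
    obtain ⟨k, rfl⟩ := hψ
    cases k with
    | zero =>
      refine ⟨m - 1, ?_⟩
      show (gyr n)^[m-1] φ = gyrInv n ((gyr n)^[0] φ)
      have h1 : gyr n ((gyr n)^[m-1] φ) = φ := by
        rw [← Function.iterate_succ_apply' (gyr n) (m-1) φ]
        rw [show (m - 1).succ = m by omega]
        exact hmper
      have h2 := osl_gyr_inv_left n (osl_orbit_supp n hφV (m-1))
      rw [h1] at h2
      simp only [Function.iterate_zero_apply]
      exact h2.symm
    | succ k =>
      refine ⟨k, ?_⟩
      show (gyr n)^[k] φ = gyrInv n ((gyr n)^[k+1] φ)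
      rw [Function.iterate_succ_apply' (gyr n) k φ]
      exact (osl_gyr_inv_left n (osl_orbit_supp n hφV k)).symm
  have hleft : ∀ ψ ∈ hfin.toFinset, gyrInv n (gyr n ψ) = ψ := by
    intro ψ hψ
    rw [Set.Finite.mem_toFinset] at hψ
    exact osl_gyr_inv_left n (hOV ψ hψ)
  have hright : ∀ ψ ∈ hfin.toFinset, gyr n (gyrInv n ψ) = ψ := by
    intro ψ hψ
    rw [Set.Finite.mem_toFinset] at hψ
    exact osl_gyr_inv_right n (hOV ψ hψ)
  have hre : ∀ f : (SqEdge → Bool) → ℤ,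
      ∑ ψ ∈ hfin.toFinset, f (gyr n ψ) = ∑ ψ ∈ hfin.toFinset, f ψ :=
    fun f => Finset.sum_nbij' (gyr n) (gyrInv n) hGmem hImem hleft hright
      (fun a _ => rfl)
  rw [finsum_mem_eq_finite_toFinset_sum (fun ψ => Nplaq ψ x y) hfin]
  by_cases hp : (x + y) % 2 = 0
  · have key : ∀ ψ : SqEdge → Bool,
        Nplaq (gyr n ψ) x y = dcol (gyr n ψ) x y - dcol ψ x y := by
      intro ψ
      have hcs := osl_colSum n x hx hx' ψ y hy'
      rw [if_pos hp, if_pos hy] at hcs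
      have hfr : Nplaq (gyr n ψ) x y = Nplaq (Hplus n ψ) x y :=
        osl_Nplaq_gyrHalf hx hx' hy hy' hp (by omega) (Hplus n ψ)
      omega
    calc ∑ ψ ∈ hfin.toFinset, Nplaq ψ x y
        = ∑ ψ ∈ hfin.toFinset, Nplaq (gyr n ψ) x y :=
          (hre (fun ψ => Nplaq ψ x y)).symm
      _ = ∑ ψ ∈ hfin.toFinset, (dcol (gyr n ψ) x y - dcol ψ x y) := by
          apply Finset.sum_congr rfl
          intro ψ _
          exact key ψ
      _ = (∑ ψ ∈ hfin.toFinset, dcol (gyr n ψ) x y)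
            - ∑ ψ ∈ hfin.toFinset, dcol ψ x y := Finset.sum_sub_distrib _ _
      _ = 0 := by rw [hre (fun ψ => dcol ψ x y)]; exact sub_self _
  · have key : ∀ ψ : SqEdge → Bool,
        Nplaq ψ x y = dcol ψ x y - dcol (gyr n ψ) x y := by
      intro ψ
      have hcs := osl_colSum n x hx hx' ψ y hy'
      rw [if_neg hp, if_pos hy] at hcs
      omega
    calc ∑ ψ ∈ hfin.toFinset, Nplaq ψ x y
        = ∑ ψ ∈ hfin.toFinset, (dcol ψ x y - dcol (gyr n ψ) x y) := by
          apply Finset.sum_congr rfl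
          intro ψ _
          exact key ψ
      _ = (∑ ψ ∈ hfin.toFinset, dcol ψ x y)
            - ∑ ψ ∈ hfin.toFinset, dcol (gyr n ψ) x y := Finset.sum_sub_distrib _ _
      _ = 0 := by rw [hre (fun ψ => dcol ψ x y)]; exact sub_self _
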